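/- (Lemma 1) Let W : ZMod 2 → Y → ℝ≥0 and W' : ZMod 2 → Y' → ℝ≥0 be binary-input discrete memoryless channels with finite output alphabets, let m ∈ ℕ and N = 2^m, and let F_m be the m-fold Kronecker power over ZMod 2 of the matrix [[1,0],[1,1]]. If W is degraded with respect to W', then for every i ∈ [N] the synthetic bit subchannel W_m^{(i)} is degraded with respect to W'_m^{(i)}, and consequently Z(W_m^{(i)}) ≥ Z(W'_m^{(i)}), where Z denotes the Bhattacharyya parameter. -/

import Mathlib

open Finset

/-- A binary-input discrete memoryless channel: the outputs sum to 1 for each input. -/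
def IsBDMC {Y : Type*} [Fintype Y] (W : ZMod 2 → Y → NNReal) : Prop :=
  ∀ u : ZMod 2, ∑ y, W u y = 1

/-- `W` is degraded with respect to `W'`. -/
def Degraded {Y Y' : Type*} [Fintype Y] [Fintype Y'] (W : ZMod 2 → Y → NNReal)
    (W' : ZMod 2 → Y' → NNReal) : Prop :=
  ∃ P : Y' → Y → NNReal, (∀ y', ∑ y, P y' y = 1) ∧
    ∀ (u : ZMod 2) (y : Y), W u y = ∑ y', W' u y' * P y' y

/-- The Bhattacharyya parameter of a B-DMC. -/
noncomputable def bhattacharyya {Y : Type*} [Fintype Y] (W : ZMod 2 → Y → NNReal) : NNReal :=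
  ∑ y, NNReal.sqrt (W 0 y * W 1 y)

/-- The 2×2 Arikan kernel [[1,0],[1,1]] over ZMod 2. -/
def arikanKernel : Matrix (Fin 2) (Fin 2) (ZMod 2) := !![1, 0; 1, 1]

/-- The m-fold Kronecker power of the Arikan kernel, naturally reindexed by `Fin (2^m)`. -/
def polarMatrix : (m : ℕ) → Matrix (Fin (2 ^ m)) (Fin (2 ^ m)) (ZMod 2)
  | 0 => 1
  | m + 1 =>
    Matrix.reindex (finProdFinEquiv.trans (finCongr (by ring : 2 * 2 ^ m = 2 ^ (m + 1))))
      (finProdFinEquiv.trans (finCongr (by ring : 2 * 2 ^ m = 2 ^ (m + 1))))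
      (Matrix.kroneckerMap (· * ·) arikanKernel (polarMatrix m))

/-- The `i`-th synthetic bit subchannel `W_m^{(i)}` of `W`, with input `u_i` and
output `(y_0^{N-1}, u_0^{i-1})`, where `N = 2^m`:
`W_m^{(i)}(y_0^{N-1}, u_0^{i-1} | u_i) = 2^{-(N-1)} ∑_{u_{i+1}^{N-1}} ∏_j W((u F_m)_j)(y_j)`. -/
noncomputable def subchannel {Y : Type*} [Fintype Y] (W : ZMod 2 → Y → NNReal) (m : ℕ)
    (i : Fin (2 ^ m)) :
    ZMod 2 → (Fin (2 ^ m) → Y) × (Fin (i : ℕ) → ZMod 2) → NNReal :=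
  fun ui out =>
    ((2 : NNReal) ^ (2 ^ m - 1))⁻¹ *
      ∑ uf : { j : Fin (2 ^ m) // (i : ℕ) < (j : ℕ) } → ZMod 2,
        ∏ j : Fin (2 ^ m),
          W (Matrix.vecMul
              (fun k : Fin (2 ^ m) =>
                if h : (k : ℕ) < (i : ℕ) then out.2 ⟨(k : ℕ), h⟩
                else if h' : (i : ℕ) < (k : ℕ) then uf ⟨k, h'⟩
                else ui)
              (polarMatrix m) j)
            (out.1 j)

/-- Cauchy–Schwarz-type inequality in `NNReal`. -/
lemma sum_sqrt_mul_le {ι : Type*} (s : Finset ι) (a b : ι → NNReal) :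
    ∑ i ∈ s, NNReal.sqrt (a i * b i) ≤
      NNReal.sqrt ((∑ i ∈ s, a i) * ∑ i ∈ s, b i) := by
  rw [NNReal.le_sqrt_iff_sq_le]
  exact Finset.sum_sq_le_sum_mul_sum_of_sq_eq_mul s (fun _ _ => zero_le)
    (fun _ _ => zero_le) (fun i _ => NNReal.sq_sqrt _)

/-- Degradation implies the Bhattacharyya parameter does not decrease. -/
lemma bhattacharyya_le_of_degraded {Y Y' : Type*} [Fintype Y] [Fintype Y']
    {W : ZMod 2 → Y → NNReal} {W' : ZMod 2 → Y' → NNReal} (h : Degraded W W') :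
    bhattacharyya W' ≤ bhattacharyya W := by
  obtain ⟨P, hPsum, hPeq⟩ := h
  unfold bhattacharyya
  calc ∑ y', NNReal.sqrt (W' 0 y' * W' 1 y')
      = ∑ y' : Y', ∑ y : Y,
          NNReal.sqrt ((W' 0 y' * P y' y) * (W' 1 y' * P y' y)) := by
        refine Finset.sum_congr rfl fun y' _ => ?_
        have : ∀ y : Y, NNReal.sqrt ((W' 0 y' * P y' y) * (W' 1 y' * P y' y))
            = NNReal.sqrt (W' 0 y' * W' 1 y') * P y' y := by
          intro y
          rw [show (W' 0 y' * P y' y) * (W' 1 y' * P y' y)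
              = (W' 0 y' * W' 1 y') * (P y' y * P y' y) by ring,
            NNReal.sqrt_mul, NNReal.sqrt_mul_self]
        simp only [this, ← Finset.mul_sum, hPsum y', mul_one]
    _ = ∑ y : Y, ∑ y' : Y',
          NNReal.sqrt ((W' 0 y' * P y' y) * (W' 1 y' * P y' y)) := Finset.sum_comm
    _ ≤ ∑ y : Y, NNReal.sqrt ((∑ y', W' 0 y' * P y' y) * ∑ y', W' 1 y' * P y' y) :=
        Finset.sum_le_sum fun y _ => sum_sqrt_mul_le _ _ _
    _ = ∑ y, NNReal.sqrt (W 0 y * W 1 y) := by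
        refine Finset.sum_congr rfl fun y _ => ?_
        rw [← hPeq 0 y, ← hPeq 1 y]

/-- Lemma 1: if `W ⪯ W'`, then `W_m^{(i)} ⪯ W'_m^{(i)}` for all `i`, and hence
`Z(W_m^{(i)}) ≥ Z(W'_m^{(i)})`. -/
theorem subchannel_degraded_and_bhattacharyya_ge {Y Y' : Type*} [Fintype Y] [Fintype Y']
    (W : ZMod 2 → Y → NNReal) (W' : ZMod 2 → Y' → NNReal)
    (hW : IsBDMC W) (hW' : IsBDMC W') (m : ℕ) (h : Degraded W W') :
    ∀ i : Fin (2 ^ m),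
      Degraded (subchannel W m i) (subchannel W' m i) ∧
        bhattacharyya (subchannel W' m i) ≤ bhattacharyya (subchannel W m i) := by
  obtain ⟨P, hPsum, hPeq⟩ := h
  intro i
  have key : ∀ (x : Fin (2 ^ m) → ZMod 2) (y : Fin (2 ^ m) → Y),
      (∑ y' : Fin (2 ^ m) → Y', (∏ j, W' (x j) (y' j)) * ∏ j, P (y' j) (y j))
        = ∏ j, W (x j) (y j) := by
    intro x y
    have h1 : ∀ y' : Fin (2 ^ m) → Y',
        (∏ j, W' (x j) (y' j)) * ∏ j, P (y' j) (y j)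
          = ∏ j, W' (x j) (y' j) * P (y' j) (y j) := fun y' =>
      (Finset.prod_mul_distrib).symm
    simp only [h1, hPeq]
    rw [Finset.prod_univ_sum, Fintype.piFinset_univ]
  have hdeg : Degraded (subchannel W m i) (subchannel W' m i) := by
    refine ⟨fun o' o => if o.2 = o'.2 then ∏ j, P (o'.1 j) (o.1 j) else 0, ?_, ?_⟩
    · intro o'
      rw [Fintype.sum_prod_type]
      have h2 : ∀ y : Fin (2 ^ m) → Y,
          (∑ v : Fin (i : ℕ) → ZMod 2,
            if v = o'.2 then ∏ j, P (o'.1 j) (y j) else 0)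
            = ∏ j, P (o'.1 j) (y j) := by
        intro y
        rw [Finset.sum_ite_eq' Finset.univ o'.2]
        simp
      simp only [h2]
      rw [← Fintype.piFinset_univ, ← Finset.prod_univ_sum]
      simp [hPsum]
    · intro u o
      obtain ⟨y, v⟩ := o
      rw [Fintype.sum_prod_type]
      have h3 : ∀ y' : Fin (2 ^ m) → Y',
          (∑ v' : Fin (i : ℕ) → ZMod 2,
            subchannel W' m i u (y', v') *
              if v = v' then ∏ j, P (y' j) (y j) else 0)
            = subchannel W' m i u (y', v) * ∏ j, P (y' j) (y j) := by
        intro y'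
        simp only [mul_ite, mul_zero]
        rw [Finset.sum_ite_eq Finset.univ v]
        simp
      simp only [h3]
      simp only [subchannel, mul_assoc]
      rw [← Finset.mul_sum]
      congr 1
      simp only [Finset.sum_mul]
      rw [Finset.sum_comm]
      exact Finset.sum_congr rfl fun uf _ => (key _ y).symm
  exact ⟨hdeg, bhattacharyya_le_of_degraded hdeg⟩
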